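/- Let G be a finite abelian group. The monoid B(G) of zero-sum sequences over G is half-factorial (every element has all factorizations into atoms of the same length) if and only if |G| ≤ 2. -/
import Mathlib


/-- A minimal zero-sum sequence over an abelian group `G` (an atom of `B(G)`). -/
def IsMinimalZeroSum {G : Type*} [AddCommGroup G] (S : Multiset G) : Prop :=
  S ≠ 0 ∧ S.sum = 0 ∧ ∀ T ≤ S, T ≠ 0 → T ≠ S → T.sum ≠ 0

lemma rep_ne_zero {G : Type*} {a : G} {n : ℕ} (h : n ≠ 0) :
    Multiset.replicate n a ≠ 0 := fun hh => by
  have := congrArg Multiset.card hh; simp at this; omega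

lemma atom_replicate {G : Type*} [AddCommGroup G] {g : G} {n : ℕ}
    (hn : addOrderOf g = n) (h2 : 2 ≤ n) :
    IsMinimalZeroSum (Multiset.replicate n g) := by
  refine ⟨rep_ne_zero (by omega), by
    rw [Multiset.sum_replicate, ← hn]; exact addOrderOf_nsmul_eq_zero g, ?_⟩
  intro T hT hT0 hTS hsum
  obtain ⟨k, hk, rfl⟩ := Multiset.le_replicate_iff.mp hT
  rw [Multiset.sum_replicate] at hsum
  have hdvd : addOrderOf g ∣ k := addOrderOf_dvd_of_nsmul_eq_zero hsum
  rw [hn] at hdvd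
  have hk0 : k ≠ 0 := fun h => hT0 (by simp [h])
  have : k = n := le_antisymm hk (Nat.le_of_dvd (Nat.pos_of_ne_zero hk0) hdvd)
  exact hTS (by rw [this])

lemma atom_pair {G : Type*} [AddCommGroup G] {a b : G}
    (ha : a ≠ 0) (hb : b ≠ 0) (hab : a + b = 0) :
    IsMinimalZeroSum ({a, b} : Multiset G) := by
  refine ⟨by simp, by simp [hab], ?_⟩
  intro T hT hT0 hTS
  have hcard : Multiset.card T ≤ 2 := by
    simpa using Multiset.card_le_card hT
  have hc1 : Multiset.card T = 1 := by
    rcases Nat.lt_or_ge (Multiset.card T) 2 with h | h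
    · have : Multiset.card T ≠ 0 := by simpa [Multiset.card_eq_zero] using hT0
      omega
    · exact absurd (Multiset.eq_of_le_of_card_le hT (by simpa using h)) hTS
  obtain ⟨x, rfl⟩ := Multiset.card_eq_one.mp hc1
  have hx : x ∈ ({a, b} : Multiset G) := Multiset.mem_of_le hT (Multiset.mem_singleton_self x)
  simp only [Multiset.sum_singleton]
  rcases Multiset.mem_cons.mp hx with h | h
  · exact h ▸ ha
  · exact (Multiset.mem_singleton.mp h) ▸ hb

lemma atom_triple {G : Type*} [AddCommGroup G] {a b c : G}
    (ha : a ≠ 0) (hb : b ≠ 0) (hc : c ≠ 0) (habc : a + b + c = 0) :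
    IsMinimalZeroSum ({a, b, c} : Multiset G) := by
  have hmem : ∀ x ∈ ({a, b, c} : Multiset G), x ≠ 0 := by
    intro x hx
    rcases Multiset.mem_cons.mp hx with h | hx
    · exact h ▸ ha
    rcases Multiset.mem_cons.mp hx with h | hx
    · exact h ▸ hb
    · exact (Multiset.mem_singleton.mp hx) ▸ hc
  have hsum : ({a, b, c} : Multiset G).sum = 0 := by
    simp [← add_assoc, habc]
  refine ⟨by simp, hsum, ?_⟩
  intro T hT hT0 hTS
  have hcard : Multiset.card T ≤ 3 := by simpa using Multiset.card_le_card hT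
  have hcne : Multiset.card T ≠ 0 := by simpa [Multiset.card_eq_zero] using hT0
  have hc3 : Multiset.card T ≠ 3 := by
    intro h
    exact hTS (Multiset.eq_of_le_of_card_le hT (by simp [h]))
  rcases Nat.lt_or_ge (Multiset.card T) 2 with h | h
  · -- card = 1
    have : Multiset.card T = 1 := by omega
    obtain ⟨x, rfl⟩ := Multiset.card_eq_one.mp this
    simpa using hmem x (Multiset.mem_of_le hT (Multiset.mem_singleton_self x))
  · -- card = 2; complement is a singleton with nonzero sum
    have hc2 : Multiset.card T = 2 := by omega
    obtain ⟨U, hU⟩ := Multiset.le_iff_exists_add.mp hT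
    have hUcard : Multiset.card U = 1 := by
      have := congrArg Multiset.card hU
      simp [hc2] at this
      omega
    obtain ⟨z, rfl⟩ := Multiset.card_eq_one.mp hUcard
    have hz : z ≠ 0 := hmem z (by rw [hU]; simp)
    have := congrArg Multiset.sum hU
    rw [hsum, Multiset.sum_add, Multiset.sum_singleton] at this
    intro hTsum
    rw [hTsum, zero_add] at this
    exact hz this.symm

lemma atom_card_classify {G : Type*} [AddCommGroup G] [Fintype G] [DecidableEq G]
    (hcard : Fintype.card G ≤ 2) {A : Multiset G} (hA : IsMinimalZeroSum A) :
    Multiset.card A + A.count 0 = 2 := by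
  obtain ⟨hA0, hAs, hAmin⟩ := hA
  have key : ∀ x : G, x + x = 0 := by
    intro x
    have h := card_nsmul_eq_zero (G := G) (x := x)
    have hpos := Fintype.card_pos (α := G)
    rcases (by omega : Fintype.card G = 1 ∨ Fintype.card G = 2) with h' | h'
    · have : Subsingleton G := Fintype.card_le_one_iff_subsingleton.mp (by omega)
      rw [Subsingleton.elim x 0]; simp
    · rw [h', two_nsmul] at h; exact h
  have uniq : ∀ x y : G, x ≠ 0 → y ≠ 0 → x = y := by
    intro x y hx hy
    by_contra hxy
    have h3 : ({0, x, y} : Finset G).card = 3 := by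
      rw [Finset.card_insert_of_notMem (by simp [Ne.symm hx, Ne.symm hy]),
        Finset.card_insert_of_notMem (by simp [hxy]), Finset.card_singleton]
    have := Finset.card_le_card (Finset.subset_univ ({0, x, y} : Finset G))
    rw [h3, Finset.card_univ] at this
    omega
  by_cases h0 : (0 : G) ∈ A
  · -- A = {0}
    have hle : ({0} : Multiset G) ≤ A := Multiset.singleton_le.mpr h0
    have : A = {0} := by
      by_contra hne
      exact hAmin {0} hle (by simp) (fun h => hne h.symm) (by simp)
    simp [this]
  · -- A = {g, g} for the nonzero g
    obtain ⟨g, hg⟩ := Multiset.exists_mem_of_ne_zero hA0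
    have hgne : g ≠ 0 := fun h => h0 (h ▸ hg)
    have hrep : A = Multiset.replicate (Multiset.card A) g := by
      rw [Multiset.eq_replicate_card]
      intro b hb
      exact uniq b g (fun h => h0 (h ▸ hb)) hgne
    set n := Multiset.card A with hn
    have hn0 : n ≠ 0 := by rw [hn]; simpa [Multiset.card_eq_zero] using hA0
    have hn2 : n ≤ 2 := by
      by_contra hlt
      refine hAmin (Multiset.replicate 2 g) ?_ (by simp) ?_ ?_
      · rw [hrep]; exact (Multiset.replicate_le_replicate g).mpr (by omega)
      · intro h
        rw [hrep] at h
        have := congrArg Multiset.card h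
        simp at this
        omega
      · rw [Multiset.sum_replicate, two_nsmul]; exact key g
    have hn1 : n ≠ 1 := by
      intro h
      rw [hrep, h] at hAs
      simp [Multiset.sum_replicate] at hAs
      exact hgne hAs
    have : n = 2 := by omega
    have hcount : A.count 0 = 0 := by simp [Multiset.count_eq_zero, h0]
    omega

lemma length_eq {G : Type*} [AddCommGroup G] [Fintype G] [DecidableEq G]
    (hcard : Fintype.card G ≤ 2) (l : List (Multiset G))
    (hl : ∀ A ∈ l, IsMinimalZeroSum A) :
    2 * l.length = Multiset.card l.sum + (l.sum).count 0 := by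
  induction l with
  | nil => simp
  | cons a t ih =>
    have ha := atom_card_classify hcard (hl a (by simp))
    have ht := ih (fun A hA => hl A (by simp [hA]))
    simp only [List.length_cons, List.sum_cons, Multiset.card_add, Multiset.count_add]
    omega

/-- Carlitz: for a finite abelian group `G`, the monoid `B(G)` of zero-sum sequences over
`G` is half-factorial (any two factorizations of a nonzero zero-sum sequence into
minimal zero-sum sequences have the same number of factors) if and only if `|G| ≤ 2`. -/
theorem stmt_9 {G : Type*} [AddCommGroup G] [Fintype G] :
    (∀ S : Multiset G, S.sum = 0 → S ≠ 0 →
      ∀ l₁ l₂ : List (Multiset G),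
        (∀ A ∈ l₁, IsMinimalZeroSum A) → (∀ A ∈ l₂, IsMinimalZeroSum A) →
        l₁.sum = S → l₂.sum = S → l₁.length = l₂.length) ↔
    Fintype.card G ≤ 2 := by
  classical
  constructor
  · intro H
    by_contra hcard
    push_neg at hcard
    by_cases hexp : ∀ x : G, x + x = 0
    · -- exponent 2, card ≥ 3: pick two distinct nonzero elements
      obtain ⟨a, ha⟩ := Fintype.exists_ne_of_one_lt_card (by omega) (0 : G)
      have hsub : ({0, a} : Finset G).card < Fintype.card G := by
        calc ({0, a} : Finset G).card ≤ 2 := Finset.card_insert_le _ _ |>.trans (by simp)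
          _ < Fintype.card G := by omega
      have hneuniv : ({0, a} : Finset G) ≠ Finset.univ := fun h => by
        rw [h, Finset.card_univ] at hsub; omega
      obtain ⟨b, -, hb⟩ := Finset.exists_of_ssubset (Finset.ssubset_univ_iff.mpr hneuniv)
      simp only [Finset.mem_insert, Finset.mem_singleton, not_or] at hb
      obtain ⟨hb0, hba⟩ := hb
      set c := a + b with hc
      have hc0 : c ≠ 0 := by
        intro h
        have : a = b := by
          have hbb := hexp b
          have : a = -b := eq_neg_of_add_eq_zero_left h
          rw [this, neg_eq_of_add_eq_zero_left hbb]
        exact hba this.symm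
      have habc : a + b + c = 0 := by rw [← hc]; exact hexp c
      have hA1 := atom_pair ha ha (hexp a)
      have hA2 := atom_pair hb0 hb0 (hexp b)
      have hA3 := atom_pair hc0 hc0 (hexp c)
      have hW := atom_triple ha hb0 hc0 habc
      have hlen := H ({a, b, c} + {a, b, c})
        (by rw [Multiset.sum_add, hW.2.1, add_zero])
        (by simp)
        [{a, a}, {b, b}, {c, c}] [{a, b, c}, {a, b, c}]
        (by intro A hA; simp at hA; rcases hA with rfl | rfl | rfl <;> assumption)
        (by intro A hA; simp at hA; rcases hA with rfl | rfl <;> exact hW)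
        (by simp only [List.sum_cons, List.sum_nil, add_zero,
              Multiset.insert_eq_cons, ← Multiset.singleton_add]; abel)
        (by simp)
      simp at hlen
    · -- exists element of order ≥ 3
      push_neg at hexp
      obtain ⟨g, hg⟩ := hexp
      have hg0 : g ≠ 0 := by intro h; rw [h] at hg; simp at hg
      set n := addOrderOf g with hn
      have hnpos : 0 < n := addOrderOf_pos g
      have hn1 : n ≠ 1 := by
        intro h
        exact hg0 (AddMonoid.addOrderOf_eq_one_iff.mp h)
      have hn2 : n ≠ 2 := by
        intro h
        apply hg
        have := addOrderOf_nsmul_eq_zero g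
        rw [← hn, h, two_nsmul] at this
        exact this
      have hn3 : 3 ≤ n := by omega
      have hU := atom_replicate hn.symm (by omega)
      have hV := atom_replicate (n := n) (g := -g) (by rw [addOrderOf_neg, hn]) (by omega)
      have hW := atom_pair hg0 (neg_ne_zero.mpr hg0) (by simp)
      have hnsmul : n • g = 0 := by rw [hn]; exact addOrderOf_nsmul_eq_zero g
      have hlen := H (Multiset.replicate n g + Multiset.replicate n (-g))
        (by simp [Multiset.sum_replicate, hnsmul])
        (fun h => by
          have := congrArg Multiset.card h; simp at this; omega)
        [Multiset.replicate n g, Multiset.replicate n (-g)]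
        (List.replicate n ({g, -g} : Multiset G))
        (by intro A hA; simp at hA; rcases hA with rfl | rfl <;> assumption)
        (by intro A hA; rw [List.eq_of_mem_replicate hA]; exact hW)
        (by simp)
        (by rw [List.sum_replicate]
            rw [show ({g, -g} : Multiset G) = {g} + {-g} by rfl]
            rw [smul_add, Multiset.nsmul_singleton, Multiset.nsmul_singleton])
      simp at hlen
      omega
  · intro hcard S hS0 hSne l₁ l₂ h₁ h₂ hs₁ hs₂
    have e₁ := length_eq hcard l₁ h₁
    have e₂ := length_eq hcard l₂ h₂
    rw [hs₁] at e₁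
    rw [hs₂] at e₂
    omega
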